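/- For every d-degenerate graph G, χ_i(G) ≤ ch_i(G) ≤ Δ(G) + 2d − 1. -/

import Mathlib

open SimpleGraph

variable {V : Type*}

/-- An incidence of a graph `G`: a pair `(v, e)` where `e` is an edge of `G` and `v ∈ e`. -/
def Inc (G : SimpleGraph V) : Type _ :=
  {p : V × Sym2 V // p.2 ∈ G.edgeSet ∧ p.1 ∈ p.2}

/-- The incidence graph `I_G` of `G`: vertices are incidences of `G`, with `(v,e)` and `(w,f)`
adjacent whenever they are distinct and `v = w`, or `e = f`, or the pair `vw` equals `e` or `f`. -/
def incGraph (G : SimpleGraph V) : SimpleGraph (Inc G) where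
  Adj a b := a ≠ b ∧ (a.1.1 = b.1.1 ∨ a.1.2 = b.1.2 ∨
      s(a.1.1, b.1.1) = a.1.2 ∨ s(a.1.1, b.1.1) = b.1.2)
  symm := ⟨by
    rintro a b ⟨hab, h⟩
    refine ⟨hab.symm, ?_⟩
    rw [Sym2.eq_swap (a := b.1.1) (b := a.1.1)]
    rcases h with h | h | h | h
    · exact Or.inl h.symm
    · exact Or.inr (Or.inl h.symm)
    · exact Or.inr (Or.inr (Or.inr h))
    · exact Or.inr (Or.inr (Or.inl h))⟩
  loopless := ⟨fun _ h => h.1 rfl⟩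

/-- `G` admits an incidence `p`-colouring. -/
def IncColorable (G : SimpleGraph V) (p : ℕ) : Prop :=
  (incGraph G).Colorable p

/-- `G` is incidence `k`-choosable. -/
def IncChoosable (G : SimpleGraph V) (k : ℕ) : Prop :=
  ∀ L : Inc G → Finset ℕ, (∀ i, (L i).card = k) →
    ∃ c : Inc G → ℕ, (∀ i, c i ∈ L i) ∧ ∀ i j, (incGraph G).Adj i j → c i ≠ c j

/-- The incidence chromatic number `χᵢ(G)`. -/
noncomputable def incChromaticNumber (G : SimpleGraph V) : ℕ :=
  sInf {p | IncColorable G p}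

/-- The incidence choice number `chᵢ(G)`. -/
noncomputable def incChoiceNumber (G : SimpleGraph V) : ℕ :=
  sInf {k | IncChoosable G k}

/-- The maximum degree `Δ(G)` of a finite graph. -/
noncomputable def maxDeg [Fintype V] (G : SimpleGraph V) : ℕ :=
  Finset.univ.sup fun v => (G.neighborSet v).ncard

/-- A graph is `d`-degenerate if every (finite, nonempty) subgraph has a vertex of degree
at most `d` within it. -/
def Degen {W : Type*} (H : SimpleGraph W) (d : ℕ) : Prop :=
  ∀ s : Set W, s.Finite → s.Nonempty → ∃ v ∈ s, (s ∩ H.neighborSet v).ncard ≤ d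


section AuxIncidence

lemma exists_list_coloring {W : Type*} (H : SimpleGraph W) (k : ℕ) (hH : Degen H k)
    (L : W → Finset ℕ) (hL : ∀ i, k + 1 ≤ (L i).card) :
    ∀ n : ℕ, ∀ s : Set W, s.Finite → s.ncard ≤ n →
      ∃ c : W → ℕ, (∀ i ∈ s, c i ∈ L i) ∧ ∀ i ∈ s, ∀ j ∈ s, H.Adj i j → c i ≠ c j := by
  classical
  intro n
  induction n with
  | zero =>
    intro s hs hcard
    have hse : s = ∅ := (Set.ncard_eq_zero hs).1 (Nat.le_zero.mp hcard)
    subst hse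
    exact ⟨fun _ => 0, by simp, by simp⟩
  | succ n ih =>
    intro s hs hcard
    rcases s.eq_empty_or_nonempty with rfl | hne
    · exact ⟨fun _ => 0, by simp, by simp⟩
    obtain ⟨v, hv, hdeg⟩ := hH s hs hne
    have hs' : (s \ {v}).Finite := hs.diff
    have hcard' : (s \ {v}).ncard ≤ n := by
      have h1 := Set.ncard_diff_singleton_of_mem hv
      have h2 : 0 < s.ncard := (Set.ncard_pos hs).2 hne
      omega
    obtain ⟨c, hc1, hc2⟩ := ih (s \ {v}) hs' hcard'
    set T : Set ℕ := c '' ((s \ {v}) ∩ H.neighborSet v) with hT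
    have hTfin : T.Finite := ((hs'.inter_of_left _)).image _
    have hTcard : T.ncard ≤ k := by
      calc T.ncard ≤ ((s \ {v}) ∩ H.neighborSet v).ncard :=
            Set.ncard_image_le (hs'.inter_of_left _)
        _ ≤ (s ∩ H.neighborSet v).ncard :=
            Set.ncard_le_ncard (Set.inter_subset_inter_left _ Set.diff_subset)
              (hs.inter_of_left _)
        _ ≤ k := hdeg
    have hpick : (L v \ hTfin.toFinset).Nonempty := by
      refine Finset.card_pos.mp ?_
      have h1 := Finset.le_card_sdiff hTfin.toFinset (L v)
      have h2 : hTfin.toFinset.card = T.ncard := (Set.ncard_eq_toFinset_card T hTfin).symm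
      have h3 := hL v
      omega
    obtain ⟨col, hcol⟩ := hpick
    rw [Finset.mem_sdiff] at hcol
    refine ⟨Function.update c v col, ?_, ?_⟩
    · intro i hi
      rcases eq_or_ne i v with rfl | hiv
      · simpa using hcol.1
      · rw [Function.update_of_ne hiv]
        exact hc1 i ⟨hi, hiv⟩
    · intro i hi j hj hadj
      rcases eq_or_ne i v with rfl | hiv
      · rcases eq_or_ne j i with rfl | hjv
        · exact absurd hadj (H.loopless.irrefl j)
        · rw [Function.update_self, Function.update_of_ne hjv]
          intro hcontra
          exact hcol.2 (by
            rw [Set.Finite.mem_toFinset]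
            exact ⟨j, ⟨⟨hj, hjv⟩, hadj⟩, hcontra.symm⟩)
      · rcases eq_or_ne j v with rfl | hjv
        · rw [Function.update_self, Function.update_of_ne hiv]
          intro hcontra
          exact hcol.2 (by
            rw [Set.Finite.mem_toFinset]
            exact ⟨i, ⟨⟨hi, hiv⟩, hadj.symm⟩, hcontra⟩)
        · rw [Function.update_of_ne hiv, Function.update_of_ne hjv]
          exact hc2 i ⟨hi, hiv⟩ j ⟨hj, hjv⟩ hadj

lemma exists_rank {W : Type*} (H : SimpleGraph W) (d : ℕ) (hH : Degen H d) :
    ∀ n : ℕ, ∀ s : Set W, s.Finite → s.ncard ≤ n →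
      ∃ r : W → ℕ, Set.InjOn r s ∧ (∀ v ∈ s, r v < s.ncard) ∧
        ∀ v ∈ s, ((s ∩ H.neighborSet v) ∩ {u | r u < r v}).ncard ≤ d := by
  classical
  intro n
  induction n with
  | zero =>
    intro s hs hcard
    have hse : s = ∅ := (Set.ncard_eq_zero hs).1 (Nat.le_zero.mp hcard)
    subst hse
    exact ⟨fun _ => 0, by simp, by simp, by simp⟩
  | succ n ih =>
    intro s hs hcard
    rcases s.eq_empty_or_nonempty with rfl | hne
    · exact ⟨fun _ => 0, by simp, by simp, by simp⟩
    obtain ⟨v, hv, hdeg⟩ := hH s hs hne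
    have hs' : (s \ {v}).Finite := hs.diff
    have hpos : 0 < s.ncard := (Set.ncard_pos hs).2 hne
    have hncard' : (s \ {v}).ncard = s.ncard - 1 := Set.ncard_diff_singleton_of_mem hv
    have hcard' : (s \ {v}).ncard ≤ n := by omega
    obtain ⟨r, hrinj, hrlt, hrdeg⟩ := ih (s \ {v}) hs' hcard'
    refine ⟨Function.update r v (s.ncard - 1), ?_, ?_, ?_⟩
    · intro a ha b hb hab
      rcases eq_or_ne a v with rfl | hav
      · rcases eq_or_ne b a with rfl | hbv
        · rfl
        · exfalso
          rw [Function.update_self, Function.update_of_ne hbv] at hab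
          have := hrlt b ⟨hb, hbv⟩
          omega
      · rcases eq_or_ne b v with rfl | hbv
        · exfalso
          rw [Function.update_self, Function.update_of_ne hav] at hab
          have := hrlt a ⟨ha, hav⟩
          omega
        · rw [Function.update_of_ne hav, Function.update_of_ne hbv] at hab
          exact hrinj ⟨ha, hav⟩ ⟨hb, hbv⟩ hab
    · intro a ha
      rcases eq_or_ne a v with rfl | hav
      · rw [Function.update_self]; omega
      · rw [Function.update_of_ne hav]
        have := hrlt a ⟨ha, hav⟩
        omega
    · intro a ha
      rcases eq_or_ne a v with rfl | hav
      · refine le_trans (Set.ncard_le_ncard ?_ (hs.inter_of_left _)) hdeg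
        exact Set.inter_subset_left
      · refine le_trans (Set.ncard_le_ncard ?_ ((hs'.inter_of_left _).inter_of_left _)) (hrdeg a ⟨ha, hav⟩)
        intro x hx
        obtain ⟨⟨hxs, hxN⟩, hxlt⟩ := hx
        simp only [Set.mem_setOf_eq] at hxlt
        have hra : Function.update r v (s.ncard - 1) a = r a := Function.update_of_ne hav _ _
        have hxv : x ≠ v := by
          intro hxv; subst hxv
          rw [Function.update_self, hra] at hxlt
          have := hrlt a ⟨ha, hav⟩
          omega
        rw [Function.update_of_ne hxv, hra] at hxlt
        exact ⟨⟨⟨hxs, hxv⟩, hxN⟩, hxlt⟩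

noncomputable def farV {G : SimpleGraph V} (J : Inc G) : V :=
  Sym2.Mem.other J.2.2

lemma farV_spec {G : SimpleGraph V} (J : Inc G) : J.1.2 = s(J.1.1, farV J) :=
  (Sym2.other_spec J.2.2).symm

lemma farV_adj {G : SimpleGraph V} (J : Inc G) : G.Adj J.1.1 (farV J) := by
  have h := J.2.1
  rw [farV_spec J] at h
  exact (SimpleGraph.mem_edgeSet G).1 h

lemma inc_ext {G : SimpleGraph V} {J J' : Inc G} (h1 : J.1.1 = J'.1.1)
    (h2 : J.1.2 = J'.1.2) : J = J' :=
  Subtype.ext (Prod.ext h1 h2)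

lemma incDegen [Fintype V] (G : SimpleGraph V) (d : ℕ) (hG : Degen G d) :
    Degen (incGraph G) (maxDeg G + 2 * d - 2) := by
  classical
  intro S hS hSne
  obtain ⟨r, hrinj', _, hrdeg'⟩ :=
    exists_rank G d hG (Set.univ : Set V).ncard Set.univ Set.finite_univ le_rfl
  have hrinj : Function.Injective r := fun a b h =>
    hrinj' (Set.mem_univ a) (Set.mem_univ b) h
  have hrdeg : ∀ v : V, ((G.neighborSet v) ∩ {u | r u < r v}).ncard ≤ d := by
    intro v
    have h := hrdeg' v (Set.mem_univ v)
    rwa [Set.univ_inter] at h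
  set B : ℕ := (Finset.univ.sup r) + 1 with hB
  have hrB : ∀ v, r v < B := fun v => Nat.lt_succ_of_le (Finset.le_sup (Finset.mem_univ v))
  set K : Inc G → ℕ := fun J => r (farV J) + B * r J.1.1 with hK
  have hKinj : Function.Injective K := by
    intro J J' h
    simp only [hK] at h
    have hb1 := hrB (farV J); have hb2 := hrB (farV J')
    have hm1 := congrArg (· % B) h
    simp only [Nat.add_mul_mod_self_left] at hm1
    rw [Nat.mod_eq_of_lt hb1, Nat.mod_eq_of_lt hb2] at hm1
    have hfar : farV J = farV J' := hrinj hm1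
    have hv : J.1.1 = J'.1.1 := by
      apply hrinj
      have hBpos : 0 < B := by omega
      have : B * r J.1.1 = B * r J'.1.1 := by omega
      exact Nat.eq_of_mul_eq_mul_left hBpos this
    exact inc_ext hv (by rw [farV_spec J, farV_spec J', hv, hfar])
  obtain ⟨I, hIS, hImax⟩ := Set.exists_max_image S K hS hSne
  refine ⟨I, hIS, ?_⟩
  set v : V := I.1.1 with hv
  set w : V := farV I with hw
  have he : I.1.2 = s(v, w) := farV_spec I
  have hvw : G.Adj v w := farV_adj I
  have hKI : K I = r w + B * r v := rfl
  have hd1 : 1 ≤ d := by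
    obtain ⟨x, hx, hxc⟩ := hG {v, w} (Set.toFinite _) ⟨v, by simp⟩
    refine le_trans ?_ hxc
    rw [Set.mem_insert_iff, Set.mem_singleton_iff] at hx
    have hne' : (({v, w} : Set V) ∩ G.neighborSet x).Nonempty := by
      rcases hx with rfl | rfl
      · exact ⟨w, by simp [SimpleGraph.mem_neighborSet, hvw]⟩
      · exact ⟨v, by simp [SimpleGraph.mem_neighborSet, hvw.symm]⟩
    exact (Set.ncard_pos (Set.toFinite _)).2 hne'
  have hdegle : ∀ x : V, (G.neighborSet x).ncard ≤ maxDeg G := fun x =>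
    Finset.le_sup (f := fun v => (G.neighborSet v).ncard) (Finset.mem_univ x)
  have hD1 : 1 ≤ maxDeg G :=
    le_trans ((Set.ncard_pos (Set.toFinite _)).2 ⟨w, hvw⟩) (hdegle v)
  -- basic facts about elements of S ∩ N(I)
  have hmemN : ∀ J ∈ S ∩ (incGraph G).neighborSet I, (incGraph G).Adj I J ∧ K J < K I := by
    intro J hJ
    have hadj : (incGraph G).Adj I J := hJ.2
    have hne : J ≠ I := fun h => (incGraph G).irrefl (h ▸ hadj)
    exact ⟨hadj, lt_of_le_of_ne (hImax J hJ.1) (fun h => hne (hKinj h))⟩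
  have hvtx_v : ∀ J : Inc G, (incGraph G).Adj I J → K J < K I → J.1.1 = v →
      farV J ≠ w ∧ G.Adj v (farV J) ∧ r (farV J) < r w := by
    intro J hadj hKlt h1
    have hne : J ≠ I := fun h => (incGraph G).irrefl (h ▸ hadj)
    have hfne : farV J ≠ w := by
      intro h2
      exact hne (inc_ext (h1.trans hv) (by rw [farV_spec J, h1, h2, ← he]))
    have hadjv : G.Adj v (farV J) := h1 ▸ farV_adj J
    have hKJ : K J = r (farV J) + B * r v := by simp only [hK, h1]
    exact ⟨hfne, hadjv, by omega⟩
  have hvtx_other : ∀ J : Inc G, (incGraph G).Adj I J → J.1.1 ≠ v → J.1.1 ≠ w →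
      J.1.2 = s(v, J.1.1) ∧ G.Adj v J.1.1 := by
    intro J hadj h1 h2
    obtain ⟨hne, hcase⟩ := (show I ≠ J ∧ _ from hadj)
    rcases hcase with h | h | h | h
    · exact absurd h.symm h1
    · exfalso
      have hmem : J.1.1 ∈ I.1.2 := h ▸ J.2.2
      rw [he, Sym2.mem_iff] at hmem
      rcases hmem with h' | h' <;> [exact h1 h'; exact h2 h']
    · exfalso
      rw [he, Sym2.eq_iff] at h
      rcases h with ⟨-, h'⟩ | ⟨h', -⟩
      · exact h2 h'
      · exact hvw.ne h'
    · have hedge : J.1.2 = s(v, J.1.1) := h.symm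
      have hadjv : G.Adj v J.1.1 := by
        have := J.2.1
        rw [hedge, SimpleGraph.mem_edgeSet] at this
        exact this
      exact ⟨hedge, hadjv⟩
  have hvtx_other_lt : ∀ J : Inc G, (incGraph G).Adj I J → K J < K I → J.1.1 ≠ v →
      J.1.1 ≠ w → r J.1.1 < r v := by
    intro J hadj hKlt h1 h2
    obtain ⟨hedge, hadjv⟩ := hvtx_other J hadj h1 h2
    have hfar : farV J = v := by
      have h3 := (farV_spec J).symm.trans hedge
      rw [Sym2.eq_iff] at h3
      rcases h3 with ⟨h', -⟩ | ⟨-, h'⟩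
      · exact absurd h' h1
      · exact h'
    have hKJ : K J = r v + B * r J.1.1 := by simp only [hK, hfar]
    have hrne : r J.1.1 ≠ r v := fun h => h1 (hrinj h)
    by_contra hcon
    have hge : r v + 1 ≤ r J.1.1 := by omega
    have hmul : B * (r v + 1) ≤ B * r J.1.1 := Nat.mul_le_mul_left B hge
    have hmul2 : B * r v + B ≤ B * r J.1.1 := by rw [Nat.mul_succ] at hmul; omega
    have := hrB w
    omega
  -- the injection
  set f : Inc G → V ⊕ (V ⊕ V) := fun J =>
    if J.1.1 = v then Sum.inl (farV J)
    else if J.1.1 = w then Sum.inr (Sum.inl (farV J))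
    else Sum.inr (Sum.inr J.1.1) with hf
  have hinj : Set.InjOn f (S ∩ (incGraph G).neighborSet I) := by
    intro J hJ J' hJ' hfeq
    obtain ⟨hadj, -⟩ := hmemN J hJ
    obtain ⟨hadj', -⟩ := hmemN J' hJ'
    simp only [hf] at hfeq
    by_cases h1 : J.1.1 = v
    · rw [if_pos h1] at hfeq
      by_cases h1' : J'.1.1 = v
      · rw [if_pos h1'] at hfeq
        have hfar : farV J = farV J' := Sum.inl.inj hfeq
        exact inc_ext (h1.trans h1'.symm) (by rw [farV_spec J, farV_spec J', h1, h1', hfar])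
      · exfalso
        rw [if_neg h1'] at hfeq
        by_cases h2' : J'.1.1 = w
        · rw [if_pos h2'] at hfeq; exact Sum.inl_ne_inr hfeq
        · rw [if_neg h2'] at hfeq; exact Sum.inl_ne_inr hfeq
    · rw [if_neg h1] at hfeq
      by_cases h1' : J'.1.1 = v
      · exfalso
        rw [if_pos h1'] at hfeq
        by_cases h2 : J.1.1 = w
        · rw [if_pos h2] at hfeq; exact Sum.inr_ne_inl hfeq
        · rw [if_neg h2] at hfeq; exact Sum.inr_ne_inl hfeq
      · rw [if_neg h1'] at hfeq
        by_cases h2 : J.1.1 = w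
        · rw [if_pos h2] at hfeq
          by_cases h2' : J'.1.1 = w
          · rw [if_pos h2'] at hfeq
            have hfar : farV J = farV J' := Sum.inl.inj (Sum.inr.inj hfeq)
            exact inc_ext (h2.trans h2'.symm)
              (by rw [farV_spec J, farV_spec J', h2, h2', hfar])
          · exfalso
            rw [if_neg h2'] at hfeq
            exact Sum.inl_ne_inr (Sum.inr.inj hfeq)
        · rw [if_neg h2] at hfeq
          by_cases h2' : J'.1.1 = w
          · exfalso
            rw [if_pos h2'] at hfeq
            exact Sum.inr_ne_inl (Sum.inr.inj hfeq)
          · rw [if_neg h2'] at hfeq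
            have hvtx : J.1.1 = J'.1.1 := Sum.inr.inj (Sum.inr.inj hfeq)
            obtain ⟨hedge, -⟩ := hvtx_other J hadj h1 h2
            obtain ⟨hedge', -⟩ := hvtx_other J' hadj' h1' h2'
            exact inc_ext hvtx (by rw [hedge, hedge', hvtx])
  rcases lt_or_gt_of_ne (show r w ≠ r v from fun h => hvw.ne' (hrinj h)) with hlt | hlt
  · -- down case : r w < r v
    set A1 : Set V := (G.neighborSet v ∩ {u | r u < r v}) \ {w} with hA1def
    set A2 : Set V := G.neighborSet w with hA2def
    set t : Set (V ⊕ (V ⊕ V)) :=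
      Sum.inl '' A1 ∪ Sum.inr '' (Sum.inl '' A2 ∪ Sum.inr '' A1) with ht
    have hA1card : A1.ncard + 1 ≤ d := by
      rw [hA1def]
      have hwmem : w ∈ G.neighborSet v ∩ {u | r u < r v} := ⟨hvw, hlt⟩
      have h1 := Set.ncard_diff_singleton_lt_of_mem hwmem (Set.toFinite _)
      have h2 := hrdeg v
      omega
    have htcard : t.ncard ≤ maxDeg G + 2 * d - 2 := by
      have h1 := Set.ncard_union_le (Sum.inl '' A1) (Sum.inr '' (Sum.inl '' A2 ∪ Sum.inr '' A1))
      have h2 := Set.ncard_union_le (Sum.inl '' A2) (Sum.inr '' A1)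
      have e1 : (Sum.inl '' A1 : Set (V ⊕ (V ⊕ V))).ncard = A1.ncard :=
        Set.ncard_image_of_injective _ Sum.inl_injective
      have e2 : (Sum.inr '' (Sum.inl '' A2 ∪ Sum.inr '' A1) : Set (V ⊕ (V ⊕ V))).ncard
          = (Sum.inl '' A2 ∪ Sum.inr '' A1 : Set (V ⊕ V)).ncard :=
        Set.ncard_image_of_injective _ Sum.inr_injective
      have e3 : (Sum.inl '' A2 : Set (V ⊕ V)).ncard = A2.ncard :=
        Set.ncard_image_of_injective _ Sum.inl_injective
      have e4 : (Sum.inr '' A1 : Set (V ⊕ V)).ncard = A1.ncard :=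
        Set.ncard_image_of_injective _ Sum.inr_injective
      have h3 : A2.ncard ≤ maxDeg G := hdegle w
      rw [ht]
      omega
    refine le_trans (Set.ncard_le_ncard_of_injOn f ?_ hinj (Set.toFinite t)) htcard
    intro J hJ
    obtain ⟨hadj, hKlt⟩ := hmemN J hJ
    by_cases h1 : J.1.1 = v
    · obtain ⟨hfne, hadjv, hflt⟩ := hvtx_v J hadj hKlt h1
      have : f J = Sum.inl (farV J) := by simp only [hf, if_pos h1]
      rw [this]
      exact Set.mem_union_left _ ⟨farV J, ⟨⟨hadjv, lt_trans hflt hlt⟩, hfne⟩, rfl⟩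
    · by_cases h2 : J.1.1 = w
      · have : f J = Sum.inr (Sum.inl (farV J)) := by simp only [hf, if_neg h1, if_pos h2]
        rw [this]
        refine Set.mem_union_right _ ⟨Sum.inl (farV J), Set.mem_union_left _ ⟨farV J, ?_, rfl⟩, rfl⟩
        have h3 := farV_adj J
        rw [h2] at h3
        exact h3
      · have : f J = Sum.inr (Sum.inr J.1.1) := by simp only [hf, if_neg h1, if_neg h2]
        rw [this]
        obtain ⟨-, hadjv⟩ := hvtx_other J hadj h1 h2
        have hltv := hvtx_other_lt J hadj hKlt h1 h2
        exact Set.mem_union_right _ ⟨Sum.inr J.1.1,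
          Set.mem_union_right _ ⟨J.1.1, ⟨⟨hadjv, hltv⟩, h2⟩, rfl⟩, rfl⟩
  · -- up case : r v < r w
    set A0 : Set V := G.neighborSet v \ {w} with hA0def
    set A3 : Set V := G.neighborSet v ∩ {u | r u < r v} with hA3def
    set t : Set (V ⊕ (V ⊕ V)) := Sum.inl '' A0 ∪ Sum.inr '' (Sum.inr '' A3) with ht
    have hA0card : A0.ncard + 1 ≤ maxDeg G := by
      rw [hA0def]
      have h1 := Set.ncard_diff_singleton_lt_of_mem (show w ∈ G.neighborSet v from hvw)
        (Set.toFinite _)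
      have h2 := hdegle v
      omega
    have htcard : t.ncard ≤ maxDeg G + 2 * d - 2 := by
      have h1 := Set.ncard_union_le (Sum.inl '' A0 : Set (V ⊕ (V ⊕ V)))
        (Sum.inr '' (Sum.inr '' A3 : Set (V ⊕ V)))
      have e1 : (Sum.inl '' A0 : Set (V ⊕ (V ⊕ V))).ncard = A0.ncard :=
        Set.ncard_image_of_injective _ Sum.inl_injective
      have e2 : (Sum.inr '' (Sum.inr '' A3) : Set (V ⊕ (V ⊕ V))).ncard
          = (Sum.inr '' A3 : Set (V ⊕ V)).ncard :=
        Set.ncard_image_of_injective _ Sum.inr_injective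
      have e3 : (Sum.inr '' A3 : Set (V ⊕ V)).ncard = A3.ncard :=
        Set.ncard_image_of_injective _ Sum.inr_injective
      have h3 : A3.ncard ≤ d := hrdeg v
      rw [ht]
      omega
    refine le_trans (Set.ncard_le_ncard_of_injOn f ?_ hinj (Set.toFinite t)) htcard
    intro J hJ
    obtain ⟨hadj, hKlt⟩ := hmemN J hJ
    by_cases h1 : J.1.1 = v
    · obtain ⟨hfne, hadjv, -⟩ := hvtx_v J hadj hKlt h1
      have : f J = Sum.inl (farV J) := by simp only [hf, if_pos h1]
      rw [this]
      exact Set.mem_union_left _ ⟨farV J, ⟨hadjv, hfne⟩, rfl⟩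
    · by_cases h2 : J.1.1 = w
      · exfalso
        have hKJ : K J = r (farV J) + B * r w := by simp only [hK, h2]
        have hmul : B * (r v + 1) ≤ B * r w := Nat.mul_le_mul_left B hlt
        have hmul2 : B * r v + B ≤ B * r w := by rw [Nat.mul_succ] at hmul; omega
        have := hrB w
        omega
      · have : f J = Sum.inr (Sum.inr J.1.1) := by simp only [hf, if_neg h1, if_neg h2]
        rw [this]
        obtain ⟨-, hadjv⟩ := hvtx_other J hadj h1 h2
        have hltv := hvtx_other_lt J hadj hKlt h1 h2
        exact Set.mem_union_right _ ⟨Sum.inr J.1.1, ⟨J.1.1, ⟨hadjv, hltv⟩, rfl⟩, rfl⟩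

instance instFiniteInc [Fintype V] (G : SimpleGraph V) : Finite (Inc G) :=
  inferInstanceAs (Finite {p : V × Sym2 V // p.2 ∈ G.edgeSet ∧ p.1 ∈ p.2})

lemma incChoosable_key [Fintype V] (G : SimpleGraph V) (d : ℕ) (hG : Degen G d) :
    IncChoosable G (maxDeg G + 2 * d - 1) := by
  classical
  intro L hL
  by_cases hE : IsEmpty (Inc G)
  · exact ⟨fun _ => 0, fun i => hE.elim i, fun i => hE.elim i⟩
  · have hne : Nonempty (Inc G) := not_isEmpty_iff.mp hE
    obtain ⟨I⟩ := hne
    have hvw : G.Adj I.1.1 (farV I) := farV_adj I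
    have hd1 : 1 ≤ d := by
      obtain ⟨x, hx, hxc⟩ := hG {I.1.1, farV I} (Set.toFinite _) ⟨I.1.1, by simp⟩
      refine le_trans ?_ hxc
      rw [Set.mem_insert_iff, Set.mem_singleton_iff] at hx
      have hne' : (({I.1.1, farV I} : Set V) ∩ G.neighborSet x).Nonempty := by
        rcases hx with rfl | rfl
        · exact ⟨farV I, by simp [SimpleGraph.mem_neighborSet, hvw]⟩
        · exact ⟨I.1.1, by simp [SimpleGraph.mem_neighborSet, hvw.symm]⟩
      exact (Set.ncard_pos (Set.toFinite _)).2 hne'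
    have hD1 : 1 ≤ maxDeg G := by
      refine le_trans ((Set.ncard_pos (Set.toFinite _)).2 ⟨farV I, hvw⟩) ?_
      exact Finset.le_sup (f := fun v => (G.neighborSet v).ncard) (Finset.mem_univ I.1.1)
    have hdeg := incDegen G d hG
    obtain ⟨c, hc1, hc2⟩ := exists_list_coloring (incGraph G) (maxDeg G + 2 * d - 2) hdeg L
      (fun i => by have := hL i; omega)
      ((Set.univ : Set (Inc G)).ncard) Set.univ Set.finite_univ le_rfl
    exact ⟨c, fun i => hc1 i trivial, fun i j hadj => hc2 i trivial j trivial hadj⟩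

lemma incChoosable_colorable (G : SimpleGraph V) (p : ℕ) (h : IncChoosable G p) :
    IncColorable G p := by
  obtain ⟨c, hc1, hc2⟩ := h (fun _ => Finset.range p) (fun _ => Finset.card_range p)
  exact ⟨SimpleGraph.Coloring.mk (fun i => ⟨c i, Finset.mem_range.mp (hc1 i)⟩)
    (fun {a b} hadj hEq => hc2 a b hadj (congrArg Fin.val hEq))⟩

end AuxIncidence

theorem stmt10 [Fintype V] (G : SimpleGraph V) (d : ℕ) (hG : Degen G d) :
    incChromaticNumber G ≤ incChoiceNumber G ∧
    incChoiceNumber G ≤ maxDeg G + 2 * d - 1 := by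
  have hkey : IncChoosable G (maxDeg G + 2 * d - 1) := incChoosable_key G d hG
  constructor
  · have hne : {k | IncChoosable G k}.Nonempty := ⟨_, hkey⟩
    have hmem : IncChoosable G (sInf {k | IncChoosable G k}) := Nat.sInf_mem hne
    exact Nat.sInf_le (incChoosable_colorable G _ hmem)
  · exact Nat.sInf_le hkey
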